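/- Let f: ℝⁿ → ℝ be continuously differentiable and let {x^k} be generated by x^{k+1} = x^k + t_k d^k with t_k ≥ 0. Suppose that inf_k f(x^k) > −∞ and: (a) f satisfies the L-descent condition for some L > 0; (b) {d^k} is gradient associated with {x^k} and ⟨∇f(x^k), d^k⟩ ≤ −κ‖d^k‖² for all k with some κ > 0; (c) ∑_{k=1}^∞ t_k = ∞ and there exist δ > 0 and N ∈ ℕ with t_k ≤ (2κ − δ)/L for all k ≥ N. Then every accumulation point of {x^k} is a stationary point of f. -/

import Mathlib

open Filter

/-- Corollary 3.4 (main part): under the L-descent condition, sufficient descent and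
gradient associated directions, non-summable stepsizes eventually bounded by
`(2κ - δ)/L`, and `inf f(x^k) > -∞`, every accumulation point of `{x^k}` is stationary. -/
theorem stmt5 {n : ℕ} (f : EuclideanSpace ℝ (Fin n) → ℝ) (hf : ContDiff ℝ 1 f)
    (x d : ℕ → EuclideanSpace ℝ (Fin n)) (t : ℕ → ℝ)
    (ht : ∀ k, 0 ≤ t k)
    (hstep : ∀ k, x (k + 1) = x k + t k • d k)
    (hinf : BddBelow (Set.range fun k => f (x k)))
    (L : ℝ) (hL : 0 < L)
    (hdesc : ∀ a b : EuclideanSpace ℝ (Fin n),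
      f b ≤ f a + (inner ℝ (gradient f a) (b - a) : ℝ) + L / 2 * ‖b - a‖ ^ 2)
    (hga : ∀ φ : ℕ → ℕ, StrictMono φ → Tendsto (d ∘ φ) atTop (nhds 0) →
      Tendsto (fun k => gradient f (x (φ k))) atTop (nhds 0))
    (κ : ℝ) (hκ : 0 < κ)
    (hsd : ∀ k, (inner ℝ (gradient f (x k)) (d k) : ℝ) ≤ -κ * ‖d k‖ ^ 2)
    (hdiv : Tendsto (fun N => ∑ k ∈ Finset.range N, t k) atTop atTop)
    (δ : ℝ) (hδ : 0 < δ) (N : ℕ) (htk : ∀ k ≥ N, t k ≤ (2 * κ - δ) / L)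
    (xbar : EuclideanSpace ℝ (Fin n))
    (hacc : ∃ φ : ℕ → ℕ, StrictMono φ ∧ Tendsto (x ∘ φ) atTop (nhds xbar)) :
    gradient f xbar = 0 := by
  classical
  by_contra hne
  obtain ⟨φ, hφ, hxφ⟩ := hacc
  set s : ℕ → ℝ := fun k => t k * ‖d k‖ ^ 2 with hs
  have hs0 : ∀ k, 0 ≤ s k := fun k => mul_nonneg (ht k) (by positivity)
  -- key descent inequality
  have key : ∀ k, N ≤ k → f (x (k + 1)) ≤ f (x k) - δ / 2 * s k := by
    intro k hk
    have hb := hdesc (x k) (x (k + 1))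
    have hxd : x (k + 1) - x k = t k • d k := by rw [hstep k]; abel
    rw [hxd, real_inner_smul_right, norm_smul, Real.norm_eq_abs,
      abs_of_nonneg (ht k)] at hb
    have h1 : (inner ℝ (gradient f (x k)) (d k) : ℝ) ≤ -κ * ‖d k‖ ^ 2 := hsd k
    have h2 : t k * L ≤ 2 * κ - δ := by
      rw [← le_div_iff₀ hL]; exact htk k hk
    have hD : (0 : ℝ) ≤ ‖d k‖ ^ 2 := by positivity
    have hT := ht k
    have hs' : s k = t k * ‖d k‖ ^ 2 := rfl
    rw [hs']
    nlinarith [mul_le_mul_of_nonneg_left h1 hT, mul_nonneg hT hD,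
      mul_nonneg (mul_nonneg hT hD) (show (0:ℝ) ≤ 2 * κ - δ - t k * L by linarith)]
  -- lower bound
  obtain ⟨B, hB⟩ := hinf
  have hBle : ∀ k, B ≤ f (x k) := fun k => hB (Set.mem_range_self k)
  -- partial sums bounded ⇒ summable
  have hpartial : ∀ m, δ / 2 * ∑ j ∈ Finset.range m, s (N + j) ≤ f (x N) - f (x (N + m)) := by
    intro m
    induction m with
    | zero => simp
    | succ m ih =>
      have hk := key (N + m) (Nat.le_add_right _ _)
      rw [Finset.sum_range_succ, show N + (m + 1) = (N + m) + 1 from rfl]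
      have := hs0 (N + m)
      nlinarith
  have hsum1 : Summable fun j => s (N + j) := by
    apply summable_of_sum_range_le (c := (f (x N) - B) * (2 / δ)) (fun j => hs0 _)
    intro m
    have h1 := hpartial m
    have h2 := hBle (N + m)
    have h3 : δ / 2 * ∑ j ∈ Finset.range m, s (N + j) ≤ f (x N) - B := by linarith
    have h4 : ∑ j ∈ Finset.range m, s (N + j)
        = (δ / 2 * ∑ j ∈ Finset.range m, s (N + j)) * (2 / δ) := by
      field_simp
    rw [h4]
    exact mul_le_mul_of_nonneg_right h3 (by positivity)
  have hsum : Summable s := by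
    have heq : (fun j => s (j + N)) = fun j => s (N + j) := by
      funext j; rw [add_comm]
    exact (summable_nat_add_iff N).mp (by rw [heq]; exact hsum1)
  -- continuity of the gradient
  have hgcont : Continuous (gradient f) := by
    have heq : gradient f = fun y =>
        (InnerProductSpace.toDual ℝ (EuclideanSpace ℝ (Fin n))).symm (fderiv ℝ f y) := rfl
    rw [heq]
    exact (InnerProductSpace.toDual ℝ (EuclideanSpace ℝ (Fin n))).symm.continuous.comp
      (hf.continuous_fderiv one_ne_zero)
  set ε := ‖gradient f xbar‖ / 2 with hεdef
  have hε0 : 0 < ε := half_pos (norm_pos_iff.mpr hne)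
  obtain ⟨r, hr0, hr⟩ := Metric.continuousAt_iff.mp hgcont.continuousAt ε hε0
  set ρ := r / 3 with hρdef
  have hρ0 : 0 < ρ := by positivity
  have hball : ∀ y, ‖y - xbar‖ ≤ 2 * ρ → ε ≤ ‖gradient f y‖ := by
    intro y hy
    have hdy : dist y xbar < r := by rw [dist_eq_norm]; linarith
    have h1 := hr hdy
    rw [dist_eq_norm] at h1
    have h2 := abs_norm_sub_norm_le (gradient f y) (gradient f xbar)
    rw [abs_le] at h2
    have := h2.1
    simp only [hεdef] at *
    linarith
  -- Claim A: on indices with large gradient, d is bounded below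
  obtain ⟨ε', hε'0, K0, hK0⟩ :
      ∃ ε' > 0, ∃ K0 : ℕ, ∀ j, K0 ≤ j → ε ≤ ‖gradient f (x j)‖ → ε' ≤ ‖d j‖ := by
    by_contra hcon
    push_neg at hcon
    have hfreq : ∀ m : ℕ, ∃ᶠ j in atTop,
        ε ≤ ‖gradient f (x j)‖ ∧ ‖d j‖ < 1 / (m + 1) := by
      intro m
      rw [frequently_atTop]
      intro K0
      obtain ⟨j, hj1, hj2, hj3⟩ := hcon (1 / (m + 1)) (by positivity) K0
      exact ⟨j, hj1, hj2, hj3⟩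
    obtain ⟨ψ, hψmono, hψ⟩ := extraction_forall_of_frequently hfreq
    have hd0 : Tendsto (d ∘ ψ) atTop (nhds 0) := by
      rw [tendsto_zero_iff_norm_tendsto_zero]
      refine squeeze_zero (fun k => norm_nonneg _) (fun k => (hψ k).2.le) ?_
      exact tendsto_one_div_add_atTop_nhds_zero_nat
    have hg0 := (hga ψ hψmono hd0).norm
    rw [norm_zero] at hg0
    obtain ⟨k, hk⟩ := ((tendsto_order.1 hg0).2 ε hε0).exists
    exact absurd (hψ k).1 (not_le.mpr hk)
  -- tails of the summable series are eventually small
  have htail : Tendsto (fun i => ∑' k, s (k + i)) atTop (nhds 0) := tendsto_sum_nat_add s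
  obtain ⟨K1, hK1⟩ := eventually_atTop.mp
    ((tendsto_order.1 htail).2 (ρ * ε') (by positivity))
  -- choose a point of the subsequence close to xbar with large index
  have h1 : ∀ᶠ k in atTop, max (max N K0) K1 ≤ φ k :=
    hφ.tendsto_atTop.eventually_ge_atTop _
  have h2 : ∀ᶠ k in atTop, ‖x (φ k) - xbar‖ < ρ := by
    have := hxφ.eventually (Metric.ball_mem_nhds xbar hρ0)
    filter_upwards [this] with k hk
    simpa [Function.comp, dist_eq_norm] using hk
  obtain ⟨k0, hk0a, hk0b⟩ := (h1.and h2).exists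
  set a := φ k0 with ha
  have haN : N ≤ a := le_trans (le_trans (le_max_left _ _) (le_max_left _ _)) hk0a
  have haK0 : K0 ≤ a := le_trans (le_trans (le_max_right _ _) (le_max_left _ _)) hk0a
  have haK1 : K1 ≤ a := le_trans (le_max_right _ _) hk0a
  have hsuma : Summable fun k => s (k + a) := (summable_nat_add_iff a).mpr hsum
  have hSa : ∑' k, s (k + a) < ρ * ε' := hK1 a haK1
  have hsum_le : ∀ m, ∑ j ∈ Finset.range m, s (j + a) ≤ ∑' k, s (k + a) :=
    fun m => Summable.sum_le_tsum (Finset.range m) (fun i _ => hs0 _) hsuma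
  -- main inductive claim
  have claim : ∀ m, ‖x (a + m) - x a‖ * ε' ≤ ∑ j ∈ Finset.range m, s (j + a) := by
    intro m
    induction m with
    | zero => simp
    | succ m ih =>
      have hxa : ‖x (a + m) - x a‖ < ρ := by
        have h3 : ‖x (a + m) - x a‖ * ε' < ρ * ε' :=
          lt_of_le_of_lt (ih.trans (hsum_le m)) hSa
        exact lt_of_mul_lt_mul_right h3 hε'0.le
      have hxb : ‖x (a + m) - xbar‖ ≤ 2 * ρ := by
        have htri : ‖x (a + m) - xbar‖ ≤ ‖x (a + m) - x a‖ + ‖x a - xbar‖ :=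
          norm_sub_le_norm_sub_add_norm_sub _ _ _
        linarith
      have hdε : ε' ≤ ‖d (a + m)‖ :=
        hK0 (a + m) (le_trans haK0 (Nat.le_add_right _ _)) (hball _ hxb)
      have hstepn : ‖x (a + m + 1) - x (a + m)‖ = t (a + m) * ‖d (a + m)‖ := by
        rw [show x (a + m + 1) - x (a + m) = t (a + m) • d (a + m) by
          rw [hstep (a + m)]; abel]
        rw [norm_smul, Real.norm_eq_abs, abs_of_nonneg (ht _)]
      have hkey : ‖x (a + m + 1) - x (a + m)‖ * ε' ≤ s (a + m) := by
        rw [hstepn]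
        have h4 : t (a + m) * ‖d (a + m)‖ * ε' ≤ t (a + m) * ‖d (a + m)‖ * ‖d (a + m)‖ :=
          mul_le_mul_of_nonneg_left hdε (mul_nonneg (ht _) (norm_nonneg _))
        have h5 : s (a + m) = t (a + m) * ‖d (a + m)‖ * ‖d (a + m)‖ := by
          simp only [hs]; ring
        linarith
      have htri2 : ‖x (a + (m + 1)) - x a‖ ≤
          ‖x (a + m + 1) - x (a + m)‖ + ‖x (a + m) - x a‖ := by
        rw [show a + (m + 1) = a + m + 1 from rfl]
        exact norm_sub_le_norm_sub_add_norm_sub _ _ _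
      rw [Finset.sum_range_succ]
      have hmul := mul_le_mul_of_nonneg_right htri2 hε'0.le
      rw [add_comm m a]
      nlinarith
  -- hence d stays bounded below along the tail, so t is summable: contradiction
  have hd' : ∀ m, ε' ≤ ‖d (a + m)‖ := by
    intro m
    have hxa : ‖x (a + m) - x a‖ < ρ := by
      have h3 : ‖x (a + m) - x a‖ * ε' < ρ * ε' :=
        lt_of_le_of_lt ((claim m).trans (hsum_le m)) hSa
      exact lt_of_mul_lt_mul_right h3 hε'0.le
    have hxb : ‖x (a + m) - xbar‖ ≤ 2 * ρ := by
      have htri : ‖x (a + m) - xbar‖ ≤ ‖x (a + m) - x a‖ + ‖x a - xbar‖ :=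
        norm_sub_le_norm_sub_add_norm_sub _ _ _
      linarith
    exact hK0 (a + m) (le_trans haK0 (Nat.le_add_right _ _)) (hball _ hxb)
  have ht' : ∀ m, ε' ^ 2 * t (a + m) ≤ s (a + m) := by
    intro m
    have h6 : ε' ^ 2 ≤ ‖d (a + m)‖ ^ 2 := by nlinarith [hd' m, norm_nonneg (d (a + m))]
    have h7 : ε' ^ 2 * t (a + m) ≤ ‖d (a + m)‖ ^ 2 * t (a + m) :=
      mul_le_mul_of_nonneg_right h6 (ht _)
    have h8 : s (a + m) = ‖d (a + m)‖ ^ 2 * t (a + m) := by simp only [hs]; ring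
    linarith
  have hbdd : ∀ m, ∑ j ∈ Finset.range m, t (a + j) ≤ (∑' k, s (k + a)) / ε' ^ 2 := by
    intro m
    have h9 : ε' ^ 2 * ∑ j ∈ Finset.range m, t (a + j) ≤ ∑ j ∈ Finset.range m, s (a + j) := by
      rw [Finset.mul_sum]
      exact Finset.sum_le_sum fun j _ => ht' j
    have h10 : ∑ j ∈ Finset.range m, s (a + j) ≤ ∑' k, s (k + a) := by
      have := hsum_le m
      have heq : ∑ j ∈ Finset.range m, s (a + j) = ∑ j ∈ Finset.range m, s (j + a) :=
        Finset.sum_congr rfl fun j _ => by rw [add_comm]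
      linarith
    rw [le_div_iff₀ (by positivity : (0:ℝ) < ε' ^ 2)]
    nlinarith
  -- contradiction with divergence of ∑ t
  have hev := hdiv.eventually_ge_atTop
    ((∑' k, s (k + a)) / ε' ^ 2 + ∑ j ∈ Finset.range a, t j + 1)
  obtain ⟨M, hM1, hM2⟩ := (hev.and (eventually_ge_atTop a)).exists
  have hsplit : ∑ j ∈ Finset.range M, t j =
      ∑ j ∈ Finset.range a, t j + ∑ j ∈ Finset.range (M - a), t (a + j) := by
    rw [← Finset.sum_range_add_sum_Ico t hM2, Finset.sum_Ico_eq_sum_range]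
  have := hbdd (M - a)
  linarith
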